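/- There is an absolute constant c > 0 such that for every n ≥ 1 and N = 2ⁿ, there exists a 2D SLP of size at most c·n deriving the 2D string Bin_N. -/

import Mathlib

/-!
## Two-dimensional strings.
A 2D string over alphabet `A` of size `h × w` is represented canonically:
`f i j` is `some` of the character in (0-indexed) row `i`, column `j` when
`i < h` and `j < w`, and `none` outside of the rectangle.  All operations
below produce such canonical representations, so equality of 2D strings
built from them coincides with equality of the dimensions and of all entries.
-/
structure Str2 (A : Type) where
  h : ℕ
  w : ℕ
  f : ℕ → ℕ → Option A

namespace Str2

variable {A : Type}

/-- Canonical constructor: pads with `none` outside of the `h × w` rectangle. -/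
def mk' (h w : ℕ) (g : ℕ → ℕ → Option A) : Str2 A :=
  ⟨h, w, fun i j => if i < h ∧ j < w then g i j else none⟩

/-- The empty 2D string. -/
def empty : Str2 A := ⟨0, 0, fun _ _ => none⟩

/-- The `1 × 1` 2D string consisting of a single character. -/
def single (a : A) : Str2 A := mk' 1 1 fun _ _ => some a

/-- Horizontal concatenation `S ⊞ T` (meaningful when the heights agree). -/
def hcat (S T : Str2 A) : Str2 A :=
  mk' S.h (S.w + T.w) fun i j => if j < S.w then S.f i j else T.f i (j - S.w)

/-- Vertical concatenation `S ⊟ T` (meaningful when the widths agree). -/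
def vcat (S T : Str2 A) : Str2 A :=
  mk' (S.h + T.h) S.w fun i j => if i < S.h then S.f i j else T.f (i - S.h) j

/-- Horizontal concatenation `S₁ ⊞ S₂ ⊞ ⋯ ⊞ S_k` of a list of 2D strings. -/
def hcatList : List (Str2 A) → Str2 A
  | [] => empty
  | S :: rest => rest.foldl hcat S

/-- Vertical concatenation `S₁ ⊟ S₂ ⊟ ⋯ ⊟ S_k` of a list of 2D strings. -/
def vcatList : List (Str2 A) → Str2 A
  | [] => empty
  | S :: rest => rest.foldl vcat S

/-- The transpose. -/
def transpose (S : Str2 A) : Str2 A := mk' S.w S.h fun i j => S.f j i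

/-- The `i`-th row (0-indexed) of `S`, as a `1 × w` 2D string. -/
def rowStr (S : Str2 A) (i : ℕ) : Str2 A := mk' 1 S.w fun _ j => S.f i j

/-- The `j`-th column (0-indexed) of `S`, read top to bottom, as a `1 × h` 2D string. -/
def colStr (S : Str2 A) (j : ℕ) : Str2 A := mk' 1 S.h fun _ i => S.f i j

/-- A height-one 2D string, viewed as an ordinary (1D) string, i.e. a list. -/
def toList (S : Str2 A) : List A := (List.range S.w).filterMap fun j => S.f 0 j

/-- An ordinary (1D) string viewed as a height-one 2D string. -/
def ofList (l : List A) : Str2 A := mk' 1 l.length fun _ j => l[j]?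

/-- The concatenation of all rows of `S` from top to bottom,
as a height-one 2D string of width `h * w`. -/
def rowsConcat (S : Str2 A) : Str2 A :=
  mk' 1 (S.h * S.w) fun _ j => S.f (j / S.w) (j % S.w)

end Str2

/-- The right-hand side of a production of a 2D SLP: a single character,
a horizontal concatenation of two nonterminals, or a vertical concatenation
of two nonterminals. -/
inductive Rhs2 (A V : Type) where
  | chr : A → Rhs2 A V
  | horiz : V → V → Rhs2 A V
  | vert : V → V → Rhs2 A V

/-- A two-dimensional straight-line program over the alphabet `A`:
a finite set `V` of nonterminals, a starting nonterminal, and a production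
map `rhs`.  Acyclicity of the relation "appears in the right-hand side of"
is witnessed by the function `rank`, which strictly decreases from the
left-hand side of each production to the nonterminals on its right-hand side. -/
structure SLP2 (A : Type) where
  V : Type
  fintypeV : Fintype V
  start : V
  rhs : V → Rhs2 A V
  rank : V → ℕ
  rank_horiz : ∀ {X Y Z}, rhs X = Rhs2.horiz Y Z → rank Y < rank X ∧ rank Z < rank X
  rank_vert : ∀ {X Y Z}, rhs X = Rhs2.vert Y Z → rank Y < rank X ∧ rank Z < rank X

namespace SLP2

variable {A : Type}

/-- Fuel-based evaluation of expansions (with enough fuel it computes the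
unique expansion of a nonterminal). -/
def expAux (G : SLP2 A) : ℕ → G.V → Str2 A
  | 0, _ => Str2.empty
  | n + 1, X =>
    match G.rhs X with
    | .chr a => Str2.single a
    | .horiz Y Z => (G.expAux n Y).hcat (G.expAux n Z)
    | .vert Y Z => (G.expAux n Y).vcat (G.expAux n Z)

/-- The (unique) expansion of a nonterminal `X`: since `rank` strictly
decreases along productions, fuel `rank X + 1` always suffices. -/
def expNT (G : SLP2 A) (X : G.V) : Str2 A := G.expAux (G.rank X + 1) X

/-- The 2D string derived by the SLP. -/
def exp (G : SLP2 A) : Str2 A := G.expNT G.start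

/-- Fuel-based computation of the depth of the derivation tree below a
nonterminal (a node labeled by a production `chr σ` has a single leaf child). -/
def depthAux (G : SLP2 A) : ℕ → G.V → ℕ
  | 0, _ => 0
  | n + 1, X =>
    match G.rhs X with
    | .chr _ => 1
    | .horiz Y Z => 1 + max (G.depthAux n Y) (G.depthAux n Z)
    | .vert Y Z => 1 + max (G.depthAux n Y) (G.depthAux n Z)

/-- The depth of the derivation tree below nonterminal `X`. -/
def depthNT (G : SLP2 A) (X : G.V) : ℕ := G.depthAux (G.rank X + 1) X

/-- The depth of the SLP: the depth of its derivation tree. -/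
def depth (G : SLP2 A) : ℕ := G.depthNT G.start

/-- The size of the SLP: the total number of symbols on the right-hand
sides of all productions. -/
def size (G : SLP2 A) : ℕ :=
  letI := G.fintypeV
  ∑ X : G.V, (match G.rhs X with
    | .chr _ => 1
    | .horiz _ _ => 2
    | .vert _ _ => 2)

/-- The number of nonterminals of the SLP. -/
def numNT (G : SLP2 A) : ℕ :=
  letI := G.fintypeV
  Fintype.card G.V

/-- Well-formedness: dimensions match in every production, i.e. in a
horizontal concatenation both arguments have equal heights, and in a
vertical concatenation both arguments have equal widths. -/
def WF (G : SLP2 A) : Prop :=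
  ∀ X : G.V,
    match G.rhs X with
    | .chr _ => True
    | .horiz Y Z => (G.expNT Y).h = (G.expNT Z).h
    | .vert Y Z => (G.expNT Y).w = (G.expNT Z).w

/-- A 1D SLP: a 2D SLP that uses only horizontal concatenations and derives
a string of height `1`. -/
def OneDim (G : SLP2 A) : Prop :=
  (∀ X Y Z, G.rhs X ≠ Rhs2.vert Y Z) ∧ (G.exp).h = 1

end SLP2
/-- The alphabet `{0, 1, $}`. -/
inductive Alpha3 : Type where
  | zero : Alpha3
  | one : Alpha3
  | dollar : Alpha3
deriving DecidableEq

instance : Fintype Alpha3 where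
  elems := {Alpha3.zero, Alpha3.one, Alpha3.dollar}
  complete := fun x => by cases x <;> simp

/-- For `N = 2^n`, the 2D string `Bin_N` of size `N × (n+2)` whose `i`-th row
(1-indexed) is the `n`-bit binary representation (most significant bit first)
of `i - 1`, surrounded by one `$` symbol on each side. -/
def binStr (n : ℕ) : Str2 Alpha3 :=
  Str2.mk' (2 ^ n) (n + 2) fun i j =>
    some (if j = 0 ∨ j = n + 1 then Alpha3.dollar
      else if Nat.testBit i (n - j) then Alpha3.one else Alpha3.zero)

/-- For `N = 2^n`, the 2D string `ShiftBin_N` of size `2N × N(n+2)`: for every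
`i ∈ [0..N-1]`, the columns `i(n+2)+1` through `(i+1)(n+2)` (1-indexed) consist
of `i` rows filled with `0`'s, followed by a copy of `Bin_N`, followed by
`N - i` rows filled with `0`'s. -/
def shiftBinStr (n : ℕ) : Str2 Alpha3 :=
  Str2.mk' (2 * 2 ^ n) (2 ^ n * (n + 2)) fun r c =>
    let i := c / (n + 2)
    if i ≤ r ∧ r < i + 2 ^ n then (binStr n).f (r - i) (c % (n + 2)) else some Alpha3.zero

/-- A binary string `b`, surrounded by one `$` symbol on each side, as a string
over an alphabet with distinguished symbols `z` (zero), `o` (one), `d` (dollar). -/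
def dollarWrap {A : Type} (z o d : A) (b : List Bool) : List A :=
  d :: (b.map fun x => if x then o else z) ++ [d]

/-- The exponent of `M'`: the largest `m` such that `M' = 2^m` satisfies
`M' * (log₂ M' + 2) ≤ M / 2`, i.e. `2 * 2^m * (m + 2) ≤ M`. -/
def mExp (M : ℕ) : ℕ := Nat.findGreatest (fun m => 2 * 2 ^ m * (m + 2) ≤ M) M

/-- The 2D string `C_{N,M}` of size `N × M`: with `M'` the largest power of two
such that `M' * (log₂ M' + 2) ≤ M / 2` and `B = ShiftBin_{M'}` (of size
`2M' × M'(log₂ M' + 2)`), it consists of a left block of `⌊N/(2M')⌋` vertically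
concatenated copies of `B` padded below with `0`'s to height `N`; to its right,
a right block of `M'` rows of `0`'s followed by `⌊(N-M')/(2M')⌋` vertically
concatenated copies of `B`, padded below with `0`'s to height `N`; and columns
of `0`'s padding the total width to `M`. -/
def gadgetC (N M : ℕ) : Str2 Alpha3 :=
  let n := mExp M
  let M' := 2 ^ n
  let W := M' * (n + 2)
  Str2.mk' N M fun r c =>
    if c < W then
      (if r < 2 * M' * (N / (2 * M')) then (shiftBinStr n).f (r % (2 * M')) c
       else some Alpha3.zero)
    else if c < 2 * W then
      (if M' ≤ r ∧ r < M' + 2 * M' * ((N - M') / (2 * M'))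
       then (shiftBinStr n).f ((r - M') % (2 * M')) (c - W)
       else some Alpha3.zero)
    else some Alpha3.zero

/-! ### Auxiliary development for the proof -/

section Generic

variable {A : Type}

lemma Str2.ext' {S T : Str2 A} (hh : S.h = T.h) (hw : S.w = T.w)
    (hf : ∀ i j, S.f i j = T.f i j) : S = T := by
  cases S; cases T
  simp only [Str2.mk.injEq] at *
  exact ⟨hh, hw, funext fun i => funext fun j => hf i j⟩

namespace SLP2

variable (G : SLP2 A)

lemma expAux_eq_expAux : ∀ (r : ℕ) (X : G.V), G.rank X ≤ r →
    ∀ f1 f2, G.rank X < f1 → G.rank X < f2 → G.expAux f1 X = G.expAux f2 X := by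
  intro r
  induction r using Nat.strong_induction_on with
  | _ r ih =>
    intro X hr f1 f2 h1 h2
    obtain ⟨a, rfl⟩ : ∃ a, f1 = a + 1 := ⟨f1 - 1, by omega⟩
    obtain ⟨c, rfl⟩ : ∃ c, f2 = c + 1 := ⟨f2 - 1, by omega⟩
    rcases hX : G.rhs X with s | ⟨Y, Z⟩ | ⟨Y, Z⟩ <;>
      simp only [expAux, hX]
    · obtain ⟨hY, hZ⟩ := G.rank_horiz hX
      rw [ih (G.rank X - 1) (by omega) Y (by omega) a (G.rank Y + 1) (by omega) (by omega),
          ih (G.rank X - 1) (by omega) Z (by omega) a (G.rank Z + 1) (by omega) (by omega),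
          ih (G.rank X - 1) (by omega) Y (by omega) c (G.rank Y + 1) (by omega) (by omega),
          ih (G.rank X - 1) (by omega) Z (by omega) c (G.rank Z + 1) (by omega) (by omega)]
    · obtain ⟨hY, hZ⟩ := G.rank_vert hX
      rw [ih (G.rank X - 1) (by omega) Y (by omega) a (G.rank Y + 1) (by omega) (by omega),
          ih (G.rank X - 1) (by omega) Z (by omega) a (G.rank Z + 1) (by omega) (by omega),
          ih (G.rank X - 1) (by omega) Y (by omega) c (G.rank Y + 1) (by omega) (by omega),
          ih (G.rank X - 1) (by omega) Z (by omega) c (G.rank Z + 1) (by omega) (by omega)]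

lemma expNT_chr {X : G.V} {a : A} (h : G.rhs X = .chr a) :
    G.expNT X = Str2.single a := by
  simp only [expNT, expAux, h]

lemma expNT_horiz {X Y Z : G.V} (h : G.rhs X = .horiz Y Z) :
    G.expNT X = (G.expNT Y).hcat (G.expNT Z) := by
  obtain ⟨hY, hZ⟩ := G.rank_horiz h
  have e : G.expNT X = G.expAux (G.rank X + 1) X := rfl
  rw [e]
  simp only [expAux, h]
  rw [G.expAux_eq_expAux (G.rank Y) Y le_rfl (G.rank X) (G.rank Y + 1) hY (Nat.lt_succ_self _),
      G.expAux_eq_expAux (G.rank Z) Z le_rfl (G.rank X) (G.rank Z + 1) hZ (Nat.lt_succ_self _)]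
  rfl

lemma expNT_vert {X Y Z : G.V} (h : G.rhs X = .vert Y Z) :
    G.expNT X = (G.expNT Y).vcat (G.expNT Z) := by
  obtain ⟨hY, hZ⟩ := G.rank_vert h
  have e : G.expNT X = G.expAux (G.rank X + 1) X := rfl
  rw [e]
  simp only [expAux, h]
  rw [G.expAux_eq_expAux (G.rank Y) Y le_rfl (G.rank X) (G.rank Y + 1) hY (Nat.lt_succ_self _),
      G.expAux_eq_expAux (G.rank Z) Z le_rfl (G.rank X) (G.rank Z + 1) hZ (Nat.lt_succ_self _)]
  rfl

end SLP2

end Generic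

/-- A single column of `m` copies of the character `a`. -/
def rep (a : Alpha3) (m : ℕ) : Str2 Alpha3 := Str2.mk' m 1 fun _ _ => some a

/-- The `2^k × k` block of all `k`-bit binary representations (MSB first). -/
def bitsStr (k : ℕ) : Str2 Alpha3 :=
  Str2.mk' (2 ^ k) k fun i j =>
    some (if Nat.testBit i (k - 1 - j) then Alpha3.one else Alpha3.zero)

@[simp] lemma rep_h (a : Alpha3) (m : ℕ) : (rep a m).h = m := rfl
@[simp] lemma rep_w (a : Alpha3) (m : ℕ) : (rep a m).w = 1 := rfl
@[simp] lemma bitsStr_h (k : ℕ) : (bitsStr k).h = 2 ^ k := rfl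
@[simp] lemma bitsStr_w (k : ℕ) : (bitsStr k).w = k := rfl
@[simp] lemma hcat_h (S T : Str2 Alpha3) : (S.hcat T).h = S.h := rfl
@[simp] lemma hcat_w (S T : Str2 Alpha3) : (S.hcat T).w = S.w + T.w := rfl
@[simp] lemma vcat_h (S T : Str2 Alpha3) : (S.vcat T).h = S.h + T.h := rfl
@[simp] lemma vcat_w (S T : Str2 Alpha3) : (S.vcat T).w = S.w := rfl
@[simp] lemma single_h (a : Alpha3) : (Str2.single a).h = 1 := rfl
@[simp] lemma single_w (a : Alpha3) : (Str2.single a).w = 1 := rfl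

@[simp] lemma binStr_h (n : ℕ) : (binStr n).h = 2 ^ n := rfl
@[simp] lemma binStr_w (n : ℕ) : (binStr n).w = n + 2 := rfl

lemma single_eq_rep (a : Alpha3) : Str2.single a = rep a 1 := rfl

lemma rep_vcat (a : Alpha3) (m m' : ℕ) :
    (rep a m).vcat (rep a m') = rep a (m + m') := by
  refine Str2.ext' rfl rfl fun i j => ?_
  show (if i < m + m' ∧ j < 1 then
          (if i < m then (if i < m ∧ j < 1 then some a else none)
           else (if i - m < m' ∧ j < 1 then some a else none))
        else none)
      = if i < m + m' ∧ j < 1 then some a else none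
  split_ifs <;> first | rfl | omega

lemma bits_one : bitsStr 1 = (rep .zero 1).vcat (rep .one 1) := by
  refine Str2.ext' rfl rfl fun i j => ?_
  show (if i < 2 ^ 1 ∧ j < 1 then
          some (if Nat.testBit i (1 - 1 - j) then Alpha3.one else Alpha3.zero) else none)
      = (if i < 1 + 1 ∧ j < 1 then
          (if i < 1 then (if i < 1 ∧ j < 1 then some Alpha3.zero else none)
           else (if i - 1 < 1 ∧ j < 1 then some Alpha3.one else none))
        else none)
  have h2 : (2:ℕ) ^ 1 = 2 := by norm_num
  by_cases hi : i < 2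
  · by_cases hj : j < 1
    · have : j = 0 := by omega
      subst this
      interval_cases i <;> decide
    · rw [if_neg (by omega), if_neg (by omega)]
  · rw [if_neg (by omega), if_neg (by omega)]

lemma bits_succ (k : ℕ) :
    bitsStr (k + 1) =
      ((rep .zero (2 ^ k)).hcat (bitsStr k)).vcat
      ((rep .one (2 ^ k)).hcat (bitsStr k)) := by
  have hpow : (2:ℕ) ^ (k + 1) = 2 ^ k + 2 ^ k := by ring
  refine Str2.ext' (by simp [hpow]) (by simp; omega) fun i j => ?_
  show (if i < 2 ^ (k+1) ∧ j < k + 1 then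
          some (if Nat.testBit i (k + 1 - 1 - j) then Alpha3.one else Alpha3.zero) else none)
      = (if i < 2 ^ k + 2 ^ k ∧ j < 1 + k then
          (if i < 2 ^ k then
             (if i < 2 ^ k ∧ j < 1 + k then
               (if j < 1 then (if i < 2 ^ k ∧ j < 1 then some Alpha3.zero else none)
                else (if i < 2 ^ k ∧ j - 1 < k then
                  some (if Nat.testBit i (k - 1 - (j - 1)) then Alpha3.one else Alpha3.zero)
                  else none))
              else none)
           else
             (if i - 2 ^ k < 2 ^ k ∧ j < 1 + k then
               (if j < 1 then (if i - 2 ^ k < 2 ^ k ∧ j < 1 then some Alpha3.one else none)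
                else (if i - 2 ^ k < 2 ^ k ∧ j - 1 < k then
                  some (if Nat.testBit (i - 2 ^ k) (k - 1 - (j - 1)) then Alpha3.one else Alpha3.zero)
                  else none))
              else none))
        else none)
  by_cases hj : j < k + 1
  · by_cases hi : i < 2 ^ k + 2 ^ k
    · rw [if_pos (show i < 2 ^ (k+1) ∧ j < k + 1 by omega),
          if_pos (show i < 2 ^ k + 2 ^ k ∧ j < 1 + k by omega)]
      by_cases hik : i < 2 ^ k
      · rw [if_pos hik, if_pos (show i < 2 ^ k ∧ j < 1 + k by omega)]
        by_cases hj0 : j < 1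
        · have : j = 0 := by omega
          subst this
          rw [if_pos hj0, if_pos (show i < 2 ^ k ∧ 0 < 1 by omega)]
          have hk : k + 1 - 1 - 0 = k := by omega
          rw [hk, Nat.testBit_lt_two_pow hik]
          simp
        · rw [if_neg hj0, if_pos (show i < 2 ^ k ∧ j - 1 < k by omega)]
          have : k + 1 - 1 - j = k - 1 - (j - 1) := by omega
          rw [this]
      · rw [if_neg hik, if_pos (show i - 2 ^ k < 2 ^ k ∧ j < 1 + k by omega)]
        obtain ⟨x, rfl⟩ : ∃ x, i = 2 ^ k + x := ⟨i - 2 ^ k, by omega⟩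
        have hxx : 2 ^ k + x - 2 ^ k = x := by omega
        by_cases hj0 : j < 1
        · have : j = 0 := by omega
          subst this
          rw [if_pos hj0, if_pos (show 2 ^ k + x - 2 ^ k < 2 ^ k ∧ 0 < 1 by omega)]
          have hk : k + 1 - 1 - 0 = k := by omega
          rw [hk, Nat.testBit_two_pow_add_eq, Nat.testBit_lt_two_pow (show x < 2 ^ k by omega)]
          simp
        · rw [if_neg hj0, if_pos (show 2 ^ k + x - 2 ^ k < 2 ^ k ∧ j - 1 < k by omega)]
          have h1 : k + 1 - 1 - j = k - 1 - (j - 1) := by omega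
          rw [h1, hxx, Nat.testBit_two_pow_add_gt (show k - 1 - (j - 1) < k by omega)]
    · rw [if_neg (by omega), if_neg (by omega)]
  · rw [if_neg (by omega), if_neg (by omega)]

lemma bin_decomp (n : ℕ) (hn : 1 ≤ n) :
    binStr n = ((rep .dollar (2 ^ n)).hcat (bitsStr n)).hcat (rep .dollar (2 ^ n)) := by
  refine Str2.ext' rfl (by simp; omega) fun i j => ?_
  show (if i < 2 ^ n ∧ j < n + 2 then
          some (if j = 0 ∨ j = n + 1 then Alpha3.dollar
            else if Nat.testBit i (n - j) then Alpha3.one else Alpha3.zero) else none)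
      = (if i < 2 ^ n ∧ j < 1 + n + 1 then
          (if j < 1 + n then
            (if i < 2 ^ n ∧ j < 1 + n then
              (if j < 1 then (if i < 2 ^ n ∧ j < 1 then some Alpha3.dollar else none)
               else (if i < 2 ^ n ∧ j - 1 < n then
                 some (if Nat.testBit i (n - 1 - (j - 1)) then Alpha3.one else Alpha3.zero)
                 else none))
             else none)
           else (if i < 2 ^ n ∧ j - (1 + n) < 1 then some Alpha3.dollar else none))
        else none)
  by_cases hi : i < 2 ^ n
  · by_cases hj : j < n + 2
    · rw [if_pos (show i < 2 ^ n ∧ j < n + 2 by omega),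
          if_pos (show i < 2 ^ n ∧ j < 1 + n + 1 by omega)]
      by_cases hj1 : j < 1 + n
      · rw [if_pos hj1, if_pos (show i < 2 ^ n ∧ j < 1 + n by omega)]
        by_cases hj0 : j < 1
        · have : j = 0 := by omega
          subst this
          rw [if_pos hj0, if_pos (show i < 2 ^ n ∧ 0 < 1 by omega),
              if_pos (show (0:ℕ) = 0 ∨ (0:ℕ) = n + 1 from Or.inl rfl)]
        · rw [if_neg hj0, if_pos (show i < 2 ^ n ∧ j - 1 < n by omega),
              if_neg (show ¬(j = 0 ∨ j = n + 1) by omega)]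
          have : n - j = n - 1 - (j - 1) := by omega
          rw [this]
      · rw [if_neg hj1, if_pos (show i < 2 ^ n ∧ j - (1 + n) < 1 by omega),
            if_pos (show j = 0 ∨ j = n + 1 by omega)]
    · rw [if_neg (by omega), if_neg (by omega)]
  · rw [if_neg (by omega), if_neg (by omega)]

/-- Nonterminals of the SLP generating `binStr n`:
`z k`/`o k`/`d k` derive columns of `2^k` zeros/ones/dollars, `b k` derives
`bitsStr k` (for `1 ≤ k`), `t k`/`u k` are helpers deriving `0`/`1` columns
glued to `bitsStr k`, `p` derives `$`-column glued to `bitsStr n`, and `s`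
is the start symbol. -/
inductive Var (n : ℕ) : Type where
  | z (k : Fin (n+1)) | o (k : Fin (n+1)) | d (k : Fin (n+1))
  | b (k : Fin (n+1)) | t (k : Fin (n+1)) | u (k : Fin (n+1))
  | p | s
deriving DecidableEq, Fintype

/-- Predecessor on `Fin (n+1)`. -/
def fpred {n : ℕ} (k : Fin (n+1)) : Fin (n+1) :=
  ⟨k.val - 1, lt_of_le_of_lt (Nat.sub_le _ _) k.isLt⟩

def lastF (n : ℕ) : Fin (n+1) := ⟨n, Nat.lt_succ_self n⟩

def rhsF (n : ℕ) : Var n → Rhs2 Alpha3 (Var n)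
  | .z k => if k.val = 0 then .chr .zero else .vert (.z (fpred k)) (.z (fpred k))
  | .o k => if k.val = 0 then .chr .one else .vert (.o (fpred k)) (.o (fpred k))
  | .d k => if k.val = 0 then .chr .dollar else .vert (.d (fpred k)) (.d (fpred k))
  | .b k => if k.val = 0 then .chr .zero else if k.val = 1 then .vert (.z ⟨0, Nat.succ_pos n⟩) (.o ⟨0, Nat.succ_pos n⟩)
      else .vert (.t (fpred k)) (.u (fpred k))
  | .t k => .horiz (.z k) (.b k)
  | .u k => .horiz (.o k) (.b k)
  | .p => .horiz (.d (lastF n)) (.b (lastF n))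
  | .s => .horiz .p (.d (lastF n))

def rankF (n : ℕ) : Var n → ℕ
  | .z k => k.val
  | .o k => k.val
  | .d k => k.val
  | .b k => 3 * k.val
  | .t k => 3 * k.val + 2
  | .u k => 3 * k.val + 2
  | .p => 3 * n + 4
  | .s => 3 * n + 5

/-- The SLP generating `binStr n`. -/
def binSLP (n : ℕ) : SLP2 Alpha3 where
  V := Var n
  fintypeV := inferInstance
  start := .s
  rhs := rhsF n
  rank := rankF n
  rank_horiz := by
    intro X Y Z h
    cases X with
    | z k => simp only [rhsF] at h; split_ifs at h <;> exact Rhs2.noConfusion h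
    | o k => simp only [rhsF] at h; split_ifs at h <;> exact Rhs2.noConfusion h
    | d k => simp only [rhsF] at h; split_ifs at h <;> exact Rhs2.noConfusion h
    | b k => simp only [rhsF] at h; split_ifs at h <;> exact Rhs2.noConfusion h
    | t k =>
      simp only [rhsF, Rhs2.horiz.injEq] at h
      obtain ⟨rfl, rfl⟩ := h; simp only [rankF]; omega
    | u k =>
      simp only [rhsF, Rhs2.horiz.injEq] at h
      obtain ⟨rfl, rfl⟩ := h; simp only [rankF]; omega
    | p =>
      simp only [rhsF, Rhs2.horiz.injEq] at h
      obtain ⟨rfl, rfl⟩ := h; simp only [rankF, lastF]; omega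
    | s =>
      simp only [rhsF, Rhs2.horiz.injEq] at h
      obtain ⟨rfl, rfl⟩ := h; simp only [rankF, lastF]; omega
  rank_vert := by
    intro X Y Z h
    cases X with
    | z k =>
      simp only [rhsF] at h
      split_ifs at h with h0
      · obtain ⟨rfl, rfl⟩ := h; simp only [rankF, fpred]; omega
    | o k =>
      simp only [rhsF] at h
      split_ifs at h with h0
      · obtain ⟨rfl, rfl⟩ := h; simp only [rankF, fpred]; omega
    | d k =>
      simp only [rhsF] at h
      split_ifs at h with h0
      · obtain ⟨rfl, rfl⟩ := h; simp only [rankF, fpred]; omega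
    | b k =>
      simp only [rhsF] at h
      split_ifs at h with h0 h1
      · obtain ⟨rfl, rfl⟩ := h; simp only [rankF, fpred]; omega
      · obtain ⟨rfl, rfl⟩ := h; simp only [rankF, fpred]; omega
    | t k => simp only [rhsF] at h; cases h
    | u k => simp only [rhsF] at h; cases h
    | p => simp only [rhsF] at h; cases h
    | s => simp only [rhsF] at h; cases h

lemma binSLP_rhs (n : ℕ) : (binSLP n).rhs = rhsF n := rfl

lemma expNT_repGen (n : ℕ) (v : Fin (n+1) → Var n) (a : Alpha3)
    (h0 : ∀ (h : 0 < n+1), rhsF n (v ⟨0, h⟩) = .chr a)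
    (hs : ∀ m (h : m+1 < n+1),
      rhsF n (v ⟨m+1, h⟩) = .vert (v ⟨m, by omega⟩) (v ⟨m, by omega⟩)) :
    ∀ m (h : m < n+1), (binSLP n).expNT (v ⟨m, h⟩) = rep a (2 ^ m) := by
  intro m
  induction m with
  | zero =>
    intro h
    rw [(binSLP n).expNT_chr (show (binSLP n).rhs (v ⟨0, h⟩) = .chr a from h0 h),
        single_eq_rep]
    norm_num
  | succ m ih =>
    intro h
    rw [(binSLP n).expNT_vert
        (show (binSLP n).rhs (v ⟨m+1, h⟩) = .vert (v ⟨m, by omega⟩) (v ⟨m, by omega⟩) from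
          hs m h),
        ih (by omega), rep_vcat]
    congr 1
    rw [pow_succ]
    ring

lemma expNT_z (n : ℕ) (k : Fin (n+1)) :
    (binSLP n).expNT (.z k) = rep .zero (2 ^ k.val) := by
  rcases k with ⟨m, h⟩
  exact expNT_repGen n Var.z .zero (fun _ => rfl)
    (fun m h => by simp [rhsF, fpred]) m h

lemma expNT_o (n : ℕ) (k : Fin (n+1)) :
    (binSLP n).expNT (.o k) = rep .one (2 ^ k.val) := by
  rcases k with ⟨m, h⟩
  exact expNT_repGen n Var.o .one (fun _ => rfl)
    (fun m h => by simp [rhsF, fpred]) m h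

lemma expNT_d (n : ℕ) (k : Fin (n+1)) :
    (binSLP n).expNT (.d k) = rep .dollar (2 ^ k.val) := by
  rcases k with ⟨m, h⟩
  exact expNT_repGen n Var.d .dollar (fun _ => rfl)
    (fun m h => by simp [rhsF, fpred]) m h

lemma expNT_bNat (n : ℕ) : ∀ m (h : m < n+1), 1 ≤ m →
    (binSLP n).expNT (.b ⟨m, h⟩) = bitsStr m := by
  intro m
  induction m with
  | zero => intro _ hm; omega
  | succ m ih =>
    intro h _
    rcases Nat.eq_zero_or_pos m with rfl | hm
    · rw [(binSLP n).expNT_vert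
        (show (binSLP n).rhs (.b ⟨1, h⟩) = .vert (.z ⟨0, by omega⟩) (.o ⟨0, by omega⟩) by
          rw [binSLP_rhs]; rfl),
        expNT_z, expNT_o, bits_one]
      norm_num
    · rw [(binSLP n).expNT_vert
        (show (binSLP n).rhs (.b ⟨m+1, h⟩) = .vert (.t ⟨m, by omega⟩) (.u ⟨m, by omega⟩) by
          rw [binSLP_rhs]; simp only [rhsF]
          rw [if_neg (show ¬ (m+1 = 0) by omega), if_neg (show ¬ (m+1 = 1) by omega)]; rfl),
        (binSLP n).expNT_horiz
          (show (binSLP n).rhs (.t ⟨m, by omega⟩)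
            = .horiz (.z ⟨m, by omega⟩) (.b ⟨m, by omega⟩) from rfl),
        (binSLP n).expNT_horiz
          (show (binSLP n).rhs (.u ⟨m, by omega⟩)
            = .horiz (.o ⟨m, by omega⟩) (.b ⟨m, by omega⟩) from rfl),
        expNT_z, expNT_o, ih (by omega) hm, bits_succ]

lemma expNT_bFin (n : ℕ) (k : Fin (n+1)) (hk : 1 ≤ k.val) :
    (binSLP n).expNT (.b k) = bitsStr k.val := by
  rcases k with ⟨m, h⟩
  exact expNT_bNat n m h hk

lemma expNT_b_h (n : ℕ) (k : Fin (n+1)) :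
    ((binSLP n).expNT (.b k)).h = 2 ^ k.val := by
  rcases Nat.eq_zero_or_pos k.val with h0 | h1
  · rw [(binSLP n).expNT_chr
      (show (binSLP n).rhs (.b k) = .chr .zero by rw [binSLP_rhs]; simp only [rhsF]; rw [if_pos h0]; rfl)]
    simp [h0]
  · rw [expNT_bFin n k h1]
    simp

lemma binSLP_exp (n : ℕ) (hn : 1 ≤ n) : (binSLP n).exp = binStr n := by
  show (binSLP n).expNT .s = _
  rw [(binSLP n).expNT_horiz
      (show (binSLP n).rhs .s = .horiz .p (.d (lastF n)) from rfl),
      (binSLP n).expNT_horiz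
      (show (binSLP n).rhs .p = .horiz (.d (lastF n)) (.b (lastF n)) from rfl),
      expNT_d, expNT_bFin n (lastF n) (by simpa [lastF] using hn), bin_decomp n hn]
  rfl

lemma binSLP_wf (n : ℕ) : (binSLP n).WF := by
  intro X
  cases X with
  | z k => by_cases h0 : k.val = 0 <;> simp [SLP2.WF, binSLP_rhs, rhsF, h0]
  | o k => by_cases h0 : k.val = 0 <;> simp [SLP2.WF, binSLP_rhs, rhsF, h0]
  | d k => by_cases h0 : k.val = 0 <;> simp [SLP2.WF, binSLP_rhs, rhsF, h0]
  | b k =>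
    by_cases h0 : k.val = 0
    · simp [SLP2.WF, binSLP_rhs, rhsF, h0]
    · by_cases h1 : k.val = 1
      · simp only [SLP2.WF, binSLP_rhs, rhsF, h0, h1, if_true, if_false, ite_false, ite_true]
        simp [expNT_z, expNT_o]
      · simp only [SLP2.WF, binSLP_rhs, rhsF, h0, h1, if_false, ite_false]
        rw [(binSLP n).expNT_horiz
            (show (binSLP n).rhs (.t (fpred k))
              = .horiz (.z (fpred k)) (.b (fpred k)) from rfl),
            (binSLP n).expNT_horiz
            (show (binSLP n).rhs (.u (fpred k))
              = .horiz (.o (fpred k)) (.b (fpred k)) from rfl)]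
        simp [expNT_z, expNT_o]
  | t k =>
    simp only [SLP2.WF, binSLP_rhs, rhsF]
    rw [expNT_z, expNT_b_h]
    simp
  | u k =>
    simp only [SLP2.WF, binSLP_rhs, rhsF]
    rw [expNT_o, expNT_b_h]
    simp
  | p =>
    simp only [SLP2.WF, binSLP_rhs, rhsF]
    rw [expNT_d, expNT_b_h]
    simp
  | s =>
    simp only [SLP2.WF, binSLP_rhs, rhsF]
    rw [(binSLP n).expNT_horiz
        (show (binSLP n).rhs .p = .horiz (.d (lastF n)) (.b (lastF n)) from rfl), expNT_d]
    simp

def toIdx (n : ℕ) : Var n → Fin 8 × Fin (n+1)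
  | .z k => (⟨0, by omega⟩, k)
  | .o k => (⟨1, by omega⟩, k)
  | .d k => (⟨2, by omega⟩, k)
  | .b k => (⟨3, by omega⟩, k)
  | .t k => (⟨4, by omega⟩, k)
  | .u k => (⟨5, by omega⟩, k)
  | .p => (⟨6, by omega⟩, ⟨0, by omega⟩)
  | .s => (⟨7, by omega⟩, ⟨0, by omega⟩)

lemma toIdx_inj (n : ℕ) : Function.Injective (toIdx n) := by
  intro a b h
  cases a <;> cases b <;> simp_all [toIdx]

lemma binSLP_size (n : ℕ) : (binSLP n).size ≤ 16 * (n + 1) := by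
  have hcard : Fintype.card (Var n) ≤ 8 * (n + 1) := by
    have := Fintype.card_le_of_injective (toIdx n) (toIdx_inj n)
    simpa using this
  have h1 : (binSLP n).size ≤ ∑ _X : Var n, 2 := by
    refine Finset.sum_le_sum fun X _ => ?_
    split <;> omega
  have h2 : ∑ _X : Var n, 2 = 2 * Fintype.card (Var n) := by
    simp [Finset.sum_const, Finset.card_univ, mul_comm]
  omega

/-- There is an absolute constant `c > 0` such that for every
`n ≥ 1` and `N = 2^n`, there is a 2D SLP of size at most `c * n` deriving the
2D string `Bin_N`. -/
theorem bin_small_slp :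
    ∃ c : ℕ, 0 < c ∧ ∀ n : ℕ, 1 ≤ n →
      ∃ G : SLP2 Alpha3, G.WF ∧ G.exp = binStr n ∧ G.size ≤ c * n := by
  refine ⟨32, by norm_num, fun n hn => ⟨binSLP n, binSLP_wf n, binSLP_exp n hn, ?_⟩⟩
  have := binSLP_size n
  omega
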